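/- Let N ≥ 1 be an integer and A ≥ 8 a real number. There exist smooth functions ψ̃, ψ : [0,∞) → [0,1] such that: (1) 1_{[0, A/4]} ≤ ψ̃ ≤ 1_{[0, A]}; (2) 1_{[1, A/4]} ≤ ψ ≤ 1_{[1/4, A]}; (3) for all y ≥ 0, ψ̃(y)² + Σ_{i ≥ 1} ψ(A^{−i} y)² = 1; (4) supp ψ̃ ∩ supp ψ(A^{−i} ·) = ∅ for every i ≥ 2, and supp ψ(A^{−i} ·) ∩ supp ψ(A^{−i′} ·) = ∅ whenever |i − i′| ≥ 2; (5) for every 0 ≤ n ≤ N there are constants C_n, independent of A, such that |ψ̃⁽ⁿ⁾(y)| ≤ C_n ψ̃(y)^{1 − n/N} A^{−n} for 0 ≤ y < A, |ψ⁽ⁿ⁾(y)| ≤ C_n ψ(y)^{1 − n/N} for 1/4 < y < 1, and |ψ⁽ⁿ⁾(y)| ≤ C_n A^{−n} ψ(y)^{1 − n/N} for A/4 < y < A. -/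

import Mathlib

noncomputable section
open Polynomial Real Set Filter Topology

namespace CutoffAux

/-- Polynomial sequence giving the iterated derivatives of `expNegInvGlue`. -/
def P : ℕ → ℝ[X]
  | 0 => 1
  | n + 1 => X ^ 2 * (P n - derivative (P n))

lemma iteratedDeriv_glue (n : ℕ) :
    iteratedDeriv n expNegInvGlue = fun x => (P n).eval x⁻¹ * expNegInvGlue x := by
  induction n with
  | zero => funext x; simp [P]
  | succ n ih =>
    rw [iteratedDeriv_succ, ih]
    funext x
    exact (expNegInvGlue.hasDerivAt_polynomial_eval_inv_mul (P n) x).deriv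

lemma glue_le_one (x : ℝ) : expNegInvGlue x ≤ 1 := by
  rcases le_or_gt x 0 with h | h
  · rw [expNegInvGlue.zero_of_nonpos h]; norm_num
  · rw [expNegInvGlue, if_neg (not_le.2 h)]
    exact Real.exp_le_one_iff.2 (by simp [inv_nonneg, h.le])

/-- Polynomial growth bound: any polynomial is dominated by `K exp (δ u)` on `[1, ∞)`. -/
lemma poly_growth (p : ℝ[X]) {δ : ℝ} (hδ : 0 < δ) :
    ∃ K : ℝ, 0 ≤ K ∧ ∀ u : ℝ, 1 ≤ u → |p.eval u| ≤ K * Real.exp (δ * u) := by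
  set q : ℝ[X] := p.comp (Polynomial.C δ⁻¹ * X) with hq
  have hqe : ∀ u : ℝ, q.eval (δ * u) = p.eval u := by
    intro u
    rw [hq, Polynomial.eval_comp]
    simp [inv_mul_cancel_left₀ hδ.ne']
  have h1 : Tendsto (fun u : ℝ => q.eval u / Real.exp u) atTop (𝓝 0) :=
    q.tendsto_div_exp_atTop
  have h2 : Tendsto (fun u : ℝ => p.eval u / Real.exp (δ * u)) atTop (𝓝 0) := by
    have := h1.comp ((tendsto_const_mul_atTop_of_pos hδ).mpr tendsto_id)
    refine this.congr fun u => ?_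
    simp only [Function.comp_apply, Pi.mul_apply, id_eq]
    rw [hqe]
  have h3 : ∀ᶠ u in atTop, |p.eval u| ≤ Real.exp (δ * u) := by
    filter_upwards [h2.eventually (Metric.closedBall_mem_nhds (0:ℝ) one_pos)] with u hu
    rw [Real.dist_eq, sub_zero, abs_div] at hu
    rw [abs_of_pos (Real.exp_pos _)] at hu
    calc |p.eval u| = |p.eval u| / Real.exp (δ*u) * Real.exp (δ*u) := by
          field_simp
      _ ≤ 1 * Real.exp (δ*u) := by
          exact mul_le_mul_of_nonneg_right hu (Real.exp_pos _).le
      _ = Real.exp (δ*u) := one_mul _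
  rw [eventually_atTop] at h3
  obtain ⟨u₀, hu₀⟩ := h3
  obtain ⟨M, hM⟩ := (isCompact_Icc (a := (1:ℝ)) (b := u₀)).exists_bound_of_continuousOn
    ((Polynomial.continuous p).norm.continuousOn)
  refine ⟨max M 1, le_trans zero_le_one (le_max_right M 1), fun u hu => ?_⟩
  rcases le_or_gt u₀ u with h | h
  · calc |p.eval u| ≤ Real.exp (δ * u) := hu₀ u h
      _ ≤ max M 1 * Real.exp (δ * u) := by
          nlinarith [Real.exp_pos (δ * u), le_max_right M 1]
  · have hmem : u ∈ Icc (1:ℝ) u₀ := ⟨hu, h.le⟩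
    have := hM u hmem
    calc |p.eval u| ≤ M := by simpa using this
      _ ≤ max M 1 := le_max_left _ _
      _ ≤ max M 1 * Real.exp (δ * u) := by
          nlinarith [Real.one_le_exp (by positivity : (0:ℝ) ≤ δ * u),
            le_max_right M 1, le_max_left M 1]




lemma glue_deriv_bound (n : ℕ) {β : ℝ} (hβ0 : 0 < β) (hβ1 : β < 1) :
    ∃ K : ℝ, 0 ≤ K ∧ ∀ t : ℝ, 0 < t → t ≤ 1 →
      |iteratedDeriv n expNegInvGlue t| ≤ K * expNegInvGlue t ^ β := by
  obtain ⟨K, hK0, hK⟩ := poly_growth (P n) (sub_pos.2 hβ1)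
  refine ⟨K, hK0, fun t ht ht1 => ?_⟩
  have hu : (1:ℝ) ≤ t⁻¹ := (one_le_inv₀ ht).2 ht1
  have hft : expNegInvGlue t = Real.exp (-t⁻¹) := by
    rw [expNegInvGlue, if_neg (not_le.2 ht)]
  have hrp : expNegInvGlue t ^ β = Real.exp (-t⁻¹ * β) := by
    rw [hft, Real.rpow_def_of_pos (Real.exp_pos _), Real.log_exp]
  have h0 : iteratedDeriv n expNegInvGlue t = (P n).eval t⁻¹ * expNegInvGlue t := by
    rw [iteratedDeriv_glue]
  rw [h0, hrp, hft]
  have h1 : |(P n).eval t⁻¹ * Real.exp (-t⁻¹)| = |(P n).eval t⁻¹| * Real.exp (-t⁻¹) := by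
    rw [abs_mul, abs_of_pos (Real.exp_pos _)]
  rw [h1]
  calc |(P n).eval t⁻¹| * Real.exp (-t⁻¹)
      ≤ K * Real.exp ((1-β) * t⁻¹) * Real.exp (-t⁻¹) :=
        mul_le_mul_of_nonneg_right (hK _ hu) (Real.exp_pos _).le
    _ = K * Real.exp (-t⁻¹ * β) := by
        rw [mul_assoc, ← Real.exp_add]; ring_nf


def dd (x : ℝ) : ℝ := Real.sqrt (expNegInvGlue x ^ 2 + expNegInvGlue (1 - x) ^ 2)
def cc (x : ℝ) : ℝ := expNegInvGlue (1 - x) / dd x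
def ss (x : ℝ) : ℝ := expNegInvGlue x / dd x

lemma sum_pos (x : ℝ) : 0 < expNegInvGlue x ^ 2 + expNegInvGlue (1 - x) ^ 2 := by
  rcases le_or_gt x 0 with h | h
  · have h1 : 0 < expNegInvGlue (1 - x) := expNegInvGlue.pos_of_pos (by linarith)
    positivity
  · have h1 : 0 < expNegInvGlue x := expNegInvGlue.pos_of_pos h
    positivity

lemma dd_pos (x : ℝ) : 0 < dd x := Real.sqrt_pos.2 (sum_pos x)

lemma dd_sq (x : ℝ) : dd x ^ 2 = expNegInvGlue x ^ 2 + expNegInvGlue (1 - x) ^ 2 :=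
  Real.sq_sqrt (sum_pos x).le

lemma glue_le_dd (x : ℝ) : expNegInvGlue (1 - x) ≤ dd x := by
  rw [dd]
  calc expNegInvGlue (1 - x) = Real.sqrt (expNegInvGlue (1 - x) ^ 2) := by
        rw [Real.sqrt_sq (expNegInvGlue.nonneg _)]
    _ ≤ _ := Real.sqrt_le_sqrt (by nlinarith [sq_nonneg (expNegInvGlue x)])

lemma glue_le_dd' (x : ℝ) : expNegInvGlue x ≤ dd x := by
  rw [dd]
  calc expNegInvGlue x = Real.sqrt (expNegInvGlue x ^ 2) := by
        rw [Real.sqrt_sq (expNegInvGlue.nonneg _)]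
    _ ≤ _ := Real.sqrt_le_sqrt (by nlinarith [sq_nonneg (expNegInvGlue (1 - x))])

lemma glue_le_one' (x : ℝ) : expNegInvGlue x ≤ 1 := by
  rcases le_or_gt x 0 with h | h
  · rw [expNegInvGlue.zero_of_nonpos h]; norm_num
  · rw [expNegInvGlue, if_neg (not_le.2 h)]
    exact Real.exp_le_one_iff.2 (by simp [inv_nonneg, h.le])

lemma dd_le_sqrt2 (x : ℝ) : dd x ≤ Real.sqrt 2 := by
  apply Real.sqrt_le_sqrt
  nlinarith [glue_le_one' x, glue_le_one' (1 - x), expNegInvGlue.nonneg x,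
    expNegInvGlue.nonneg (1 - x)]

lemma cc_nonneg (x : ℝ) : 0 ≤ cc x := div_nonneg (expNegInvGlue.nonneg _) (dd_pos x).le
lemma ss_nonneg (x : ℝ) : 0 ≤ ss x := div_nonneg (expNegInvGlue.nonneg _) (dd_pos x).le
lemma cc_le_one (x : ℝ) : cc x ≤ 1 := div_le_one_of_le₀ (glue_le_dd x) (dd_pos x).le
lemma ss_le_one (x : ℝ) : ss x ≤ 1 := div_le_one_of_le₀ (glue_le_dd' x) (dd_pos x).le

lemma cc_of_nonpos {x : ℝ} (h : x ≤ 0) : cc x = 1 := by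
  have h0 : expNegInvGlue x = 0 := expNegInvGlue.zero_of_nonpos h
  have h1 : 0 < expNegInvGlue (1 - x) := expNegInvGlue.pos_of_pos (by linarith)
  rw [cc, dd, h0]
  rw [show (0:ℝ) ^ 2 + expNegInvGlue (1 - x) ^ 2 = expNegInvGlue (1 - x) ^ 2 by ring,
    Real.sqrt_sq h1.le, div_self h1.ne']

lemma cc_of_one_le {x : ℝ} (h : 1 ≤ x) : cc x = 0 := by
  rw [cc, expNegInvGlue.zero_of_nonpos (by linarith), zero_div]

lemma ss_of_nonpos {x : ℝ} (h : x ≤ 0) : ss x = 0 := by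
  rw [ss, expNegInvGlue.zero_of_nonpos h, zero_div]

lemma ss_of_one_le {x : ℝ} (h : 1 ≤ x) : ss x = 1 := by
  have h0 : expNegInvGlue (1 - x) = 0 := expNegInvGlue.zero_of_nonpos (by linarith)
  have h1 : 0 < expNegInvGlue x := expNegInvGlue.pos_of_pos (by linarith)
  rw [ss, dd, h0]
  rw [show expNegInvGlue x ^ 2 + (0:ℝ) ^ 2 = expNegInvGlue x ^ 2 by ring,
    Real.sqrt_sq h1.le, div_self h1.ne']

lemma cc_sq_add_ss_sq (x : ℝ) : cc x ^ 2 + ss x ^ 2 = 1 := by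
  rw [cc, ss, div_pow, div_pow, ← add_div, dd_sq]
  rw [add_comm (expNegInvGlue (1-x) ^ 2)]
  exact div_self (sum_pos x).ne'

lemma dd_comm (x : ℝ) : dd (1 - x) = dd x := by
  rw [dd, dd, show (1 - (1 - x)) = x by ring, add_comm]

lemma ss_eq_cc (x : ℝ) : ss x = cc (1 - x) := by
  rw [ss, cc, show (1 - (1 - x)) = x by ring, dd_comm]

lemma glue_le_cc (x : ℝ) : expNegInvGlue (1 - x) ≤ Real.sqrt 2 * cc x := by
  rw [cc, ← mul_div_assoc, le_div_iff₀ (dd_pos x)]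
  calc expNegInvGlue (1 - x) * dd x ≤ expNegInvGlue (1 - x) * Real.sqrt 2 :=
        mul_le_mul_of_nonneg_left (dd_le_sqrt2 x) (expNegInvGlue.nonneg _)
    _ = Real.sqrt 2 * expNegInvGlue (1 - x) := mul_comm _ _

lemma contDiff_dd : ContDiff ℝ (⊤ : ℕ∞) dd := by
  apply ContDiff.sqrt
  · exact (expNegInvGlue.contDiff.pow 2).add
      ((expNegInvGlue.contDiff.comp (contDiff_const.sub contDiff_id)).pow 2)
  · exact fun x => (sum_pos x).ne'

lemma contDiff_cc : ContDiff ℝ (⊤ : ℕ∞) cc :=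
  (expNegInvGlue.contDiff.comp (contDiff_const.sub contDiff_id)).div contDiff_dd
    fun x => (dd_pos x).ne'

lemma contDiff_ss : ContDiff ℝ (⊤ : ℕ∞) ss :=
  expNegInvGlue.contDiff.div contDiff_dd fun x => (dd_pos x).ne'

lemma contDiff_hh : ContDiff ℝ (⊤ : ℕ∞) (fun x => (dd x)⁻¹) :=
  contDiff_dd.inv fun x => (dd_pos x).ne'




lemma iteratedDeriv_comp_one_sub (g : ℝ → ℝ) (n : ℕ) (x : ℝ) :
    iteratedDeriv n (fun y => g (1 - y)) x = (-1:ℝ)^n • iteratedDeriv n g (1 - x) := by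
  have h2 : iteratedDeriv n (fun y => g (1 - y)) x
      = iteratedDeriv n (fun y => (fun z => g (z + 1)) (-y)) x := by
    apply Filter.EventuallyEq.iteratedDeriv_eq
    apply Filter.Eventually.of_forall
    intro y; show g (1 - y) = g (-y + 1); congr 1; ring
  have h3 := iteratedDeriv_comp_neg n (fun z => g (z + 1)) x
  rw [h2, h3, iteratedDeriv_comp_add_const]
  congr 1
  ring_nf

lemma abs_smul_neg_one_pow (n : ℕ) (r : ℝ) : |((-1:ℝ)^n • r)| = |r| := by
  rw [smul_eq_mul, abs_mul, abs_pow, abs_neg, abs_one, one_pow, one_mul]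

lemma cont_hh_deriv (n : ℕ) : Continuous (iteratedDeriv n (fun x => (dd x)⁻¹)) :=
  contDiff_hh.continuous_iteratedDeriv n (by exact_mod_cast le_top)


lemma cc_master (N : ℕ) (hN : 1 ≤ N) :
    ∃ B : ℕ → ℝ, (∀ n, 1 ≤ B n) ∧ ∀ n, n ≤ N → ∀ x : ℝ, x < 1 →
      |iteratedDeriv n cc x| ≤ B n * cc x ^ ((1:ℝ) - (n:ℝ) / (N:ℝ)) := by
  have hNR : (1:ℝ) ≤ (N:ℝ) := by exact_mod_cast hN
  have hNpos : (0:ℝ) < (N:ℝ) := by linarith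
  set β : ℝ := 1 - 1 / (2 * N) with hβ
  have hβ0 : 0 < β := by
    have : 1 / (2 * (N:ℝ)) ≤ 1 / 2 := by
      apply div_le_div_of_nonneg_left <;> linarith
    simp only [hβ]; linarith
  have hβ1 : β < 1 := by
    have : 0 < 1 / (2 * (N:ℝ)) := by positivity
    simp only [hβ]; linarith
  -- bounds for glue derivatives
  choose K hK0 hKb using fun i => glue_deriv_bound i hβ0 hβ1
  -- bounds for derivatives of (dd)⁻¹ on [0,1]
  have hHex : ∀ k : ℕ, ∃ M : ℝ, ∀ x ∈ Icc (0:ℝ) 1, |iteratedDeriv k (fun y => (dd y)⁻¹) x| ≤ M := by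
    intro k
    obtain ⟨M, hM⟩ := (isCompact_Icc (a := (0:ℝ)) (b := 1)).exists_bound_of_continuousOn
      (cont_hh_deriv k).continuousOn
    exact ⟨M, fun x hx => hM x hx⟩
  choose H hH using hHex
  have hH0 : ∀ k, 0 ≤ H k := fun k =>
    (abs_nonneg _).trans (hH k 0 ⟨le_rfl, zero_le_one⟩)
  set S : ℕ → ℝ := fun n =>
    ∑ i ∈ Finset.range (n + 1), (n.choose i : ℝ) * K i * H (n - i) with hS
  have hS0 : ∀ n, 0 ≤ S n := by
    intro n
    apply Finset.sum_nonneg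
    intro i _
    have := hK0 i
    have := hH0 (n - i)
    positivity
  have sqrt2_ge_one : (1:ℝ) ≤ Real.sqrt 2 := by
    rw [show (1:ℝ) = Real.sqrt 1 by simp]
    exact Real.sqrt_le_sqrt (by norm_num)
  refine ⟨fun n => max 1 (Real.sqrt 2 * S n), fun n => le_max_left _ _, ?_⟩
  intro n hn x hx
  set e : ℝ := (1:ℝ) - (n:ℝ) / (N:ℝ) with he
  have he0 : 0 ≤ e := by
    have : (n:ℝ) / (N:ℝ) ≤ 1 := by
      rw [div_le_one hNpos]; exact_mod_cast hn
    simp only [he]; linarith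
  have he1 : e ≤ 1 := by
    have : 0 ≤ (n:ℝ) / (N:ℝ) := by positivity
    simp only [he]; linarith
  rcases Nat.eq_zero_or_pos n with rfl | hn1
  · -- n = 0
    have : e = 1 := by simp [he]
    rw [this, Real.rpow_one, iteratedDeriv_zero, abs_of_nonneg (cc_nonneg x)]
    calc cc x = 1 * cc x := (one_mul _).symm
      _ ≤ max 1 (Real.sqrt 2 * S 0) * cc x :=
        mul_le_mul_of_nonneg_right (le_max_left _ _) (cc_nonneg x)
  rcases lt_or_ge x 0 with hx0 | hx0
  · -- x < 0 : cc is locally constant 1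
    have hev : cc =ᶠ[nhds x] (fun _ => (1:ℝ)) := by
      filter_upwards [Iio_mem_nhds hx0] with y hy
      exact cc_of_nonpos (le_of_lt hy)
    rw [Filter.EventuallyEq.iteratedDeriv_eq n hev]
    have hzero : |iteratedDeriv n (fun _ : ℝ => (1:ℝ)) x| = 0 := by
      rw [← Real.norm_eq_abs, ← norm_iteratedFDeriv_eq_norm_iteratedDeriv,
        iteratedFDeriv_const_of_ne (by omega : n ≠ 0)]
      simp
    rw [hzero]
    have h1 : (0:ℝ) ≤ max 1 (Real.sqrt 2 * S n) := le_trans zero_le_one (le_max_left _ _)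
    have h2 := Real.rpow_nonneg (cc_nonneg x) e
    positivity
  · -- 0 ≤ x < 1 : Leibniz
    have ht0 : 0 < 1 - x := by linarith
    have ht1 : 1 - x ≤ 1 := by linarith
    have hfpos : 0 < expNegInvGlue (1 - x) := expNegInvGlue.pos_of_pos ht0
    set g1 : ℝ → ℝ := fun y => expNegInvGlue (1 - y) with hg1
    set g2 : ℝ → ℝ := fun y => (dd y)⁻¹ with hg2
    have hcc : cc = fun y => g1 y * g2 y := by
      funext y; simp only [hg1, hg2, cc]; rw [div_eq_mul_inv]
    have hg1smooth : ContDiff ℝ (n:ℕ) g1 := by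
      have h : ContDiff ℝ ((n:ℕ) : ℕ∞) g1 :=
        expNegInvGlue.contDiff.comp (contDiff_const.sub contDiff_id)
      exact h.of_le (by exact_mod_cast le_rfl)
    have hg2smooth : ContDiff ℝ (n:ℕ) g2 :=
      (contDiff_hh).of_le (by exact_mod_cast le_top)
    have hleib : |iteratedDeriv n cc x| ≤ ∑ i ∈ Finset.range (n + 1),
        (n.choose i : ℝ) * |iteratedDeriv i g1 x| * |iteratedDeriv (n - i) g2 x| := by
      rw [hcc, ← Real.norm_eq_abs, ← norm_iteratedFDeriv_eq_norm_iteratedDeriv]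
      refine le_trans (norm_iteratedFDeriv_mul_le hg1smooth hg2smooth x le_rfl) ?_
      apply le_of_eq
      apply Finset.sum_congr rfl
      intro i _
      rw [norm_iteratedFDeriv_eq_norm_iteratedDeriv, norm_iteratedFDeriv_eq_norm_iteratedDeriv,
        Real.norm_eq_abs, Real.norm_eq_abs]
    have hterm : ∀ i ∈ Finset.range (n + 1),
        (n.choose i : ℝ) * |iteratedDeriv i g1 x| * |iteratedDeriv (n - i) g2 x|
          ≤ ((n.choose i : ℝ) * K i * H (n - i)) * expNegInvGlue (1 - x) ^ β := by
      intro i _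
      have h1 : |iteratedDeriv i g1 x| ≤ K i * expNegInvGlue (1 - x) ^ β := by
        have := iteratedDeriv_comp_one_sub expNegInvGlue i x
        have habs : |iteratedDeriv i g1 x| = |iteratedDeriv i expNegInvGlue (1 - x)| := by
          rw [hg1]
          rw [show (fun y => expNegInvGlue (1 - y)) = g1 by rfl] at this
          rw [this, abs_smul_neg_one_pow]
        rw [habs]
        exact hKb i (1 - x) ht0 ht1
      have h2 : |iteratedDeriv (n - i) g2 x| ≤ H (n - i) :=
        hH (n - i) x ⟨hx0, hx.le⟩
      have hb : (0:ℝ) ≤ (n.choose i : ℝ) := by positivity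
      have hrp : (0:ℝ) ≤ expNegInvGlue (1 - x) ^ β := Real.rpow_nonneg (expNegInvGlue.nonneg _) _
      calc (n.choose i : ℝ) * |iteratedDeriv i g1 x| * |iteratedDeriv (n - i) g2 x|
          ≤ (n.choose i : ℝ) * (K i * expNegInvGlue (1 - x) ^ β) * H (n - i) := by
            apply mul_le_mul
            · exact mul_le_mul_of_nonneg_left h1 hb
            · exact h2
            · exact abs_nonneg _
            · exact mul_nonneg hb (mul_nonneg (hK0 i) hrp)
        _ = ((n.choose i : ℝ) * K i * H (n - i)) * expNegInvGlue (1 - x) ^ β := by ring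
    have hsum : |iteratedDeriv n cc x| ≤ S n * expNegInvGlue (1 - x) ^ β := by
      refine le_trans hleib ?_
      rw [hS, Finset.sum_mul]
      exact Finset.sum_le_sum hterm
    -- now convert the exponent
    have hfle1 : expNegInvGlue (1 - x) ≤ 1 := glue_le_one' _
    have hβe : e ≤ β := by
      simp only [he, hβ]
      have h1 : 1 / (2 * (N:ℝ)) ≤ (n:ℝ) / (N:ℝ) := by
        rw [div_le_div_iff₀ (by positivity) hNpos]
        have : (1:ℝ) ≤ (n:ℝ) := by exact_mod_cast hn1
        nlinarith
      linarith
    have step1 : expNegInvGlue (1 - x) ^ β ≤ expNegInvGlue (1 - x) ^ e :=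
      Real.rpow_le_rpow_of_exponent_ge hfpos hfle1 hβe
    have step2 : expNegInvGlue (1 - x) ^ e ≤ Real.sqrt 2 * cc x ^ e := by
      calc expNegInvGlue (1 - x) ^ e ≤ (Real.sqrt 2 * cc x) ^ e :=
            Real.rpow_le_rpow (expNegInvGlue.nonneg _) (glue_le_cc x) he0
        _ = Real.sqrt 2 ^ e * cc x ^ e :=
            Real.mul_rpow (Real.sqrt_nonneg _) (cc_nonneg x)
        _ ≤ Real.sqrt 2 * cc x ^ e := by
            apply mul_le_mul_of_nonneg_right _ (Real.rpow_nonneg (cc_nonneg x) e)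
            calc Real.sqrt 2 ^ e ≤ Real.sqrt 2 ^ (1:ℝ) :=
                  Real.rpow_le_rpow_of_exponent_le sqrt2_ge_one he1
              _ = Real.sqrt 2 := Real.rpow_one _
    calc |iteratedDeriv n cc x| ≤ S n * expNegInvGlue (1 - x) ^ β := hsum
      _ ≤ S n * (Real.sqrt 2 * cc x ^ e) := by
          apply mul_le_mul_of_nonneg_left _ (hS0 n)
          exact le_trans step1 step2
      _ = (Real.sqrt 2 * S n) * cc x ^ e := by ring
      _ ≤ max 1 (Real.sqrt 2 * S n) * cc x ^ e :=
          mul_le_mul_of_nonneg_right (le_max_right _ _) (Real.rpow_nonneg (cc_nonneg x) e)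


lemma iteratedDeriv_affine {g : ℝ → ℝ} (hg : ContDiff ℝ (⊤:ℕ∞) g) (a b : ℝ) (n : ℕ) (x : ℝ) :
    iteratedDeriv n (fun y => g (a * y + b)) x = a ^ n * iteratedDeriv n g (a * x + b) := by
  have hgb : ContDiff ℝ (n : ℕ) (fun z => g (z + b)) := by
    have h : ContDiff ℝ ((⊤:ℕ∞)) (fun z => g (z + b)) := hg.comp (contDiff_id.add contDiff_const)
    exact h.of_le (by exact_mod_cast le_top)
  have h3 := iteratedDeriv_comp_const_mul hgb a
  have h2 : iteratedDeriv n (fun y => g (a * y + b)) x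
      = iteratedDeriv n (fun y => (fun z => g (z + b)) (a * y)) x := rfl
  rw [h2, congrFun h3 x, iteratedDeriv_comp_add_const]

lemma ss_master (N : ℕ) (hN : 1 ≤ N) :
    ∃ B : ℕ → ℝ, (∀ n, 1 ≤ B n) ∧
      (∀ n, n ≤ N → ∀ x : ℝ, x < 1 →
        |iteratedDeriv n cc x| ≤ B n * cc x ^ ((1:ℝ) - (n:ℝ) / (N:ℝ))) ∧
      (∀ n, n ≤ N → ∀ x : ℝ, 0 < x →
        |iteratedDeriv n ss x| ≤ B n * ss x ^ ((1:ℝ) - (n:ℝ) / (N:ℝ))) := by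
  obtain ⟨B, hB1, hBc⟩ := cc_master N hN
  refine ⟨B, hB1, hBc, ?_⟩
  intro n hn x hx
  have h1 : ss = fun y => cc (1 - y) := funext ss_eq_cc
  have h2 : |iteratedDeriv n ss x| = |iteratedDeriv n cc (1 - x)| := by
    rw [h1, iteratedDeriv_comp_one_sub, abs_smul_neg_one_pow]
  rw [h2, ss_eq_cc]
  exact hBc n hn (1 - x) (by linarith)

end CutoffAux

end

set_option maxHeartbeats 1000000 in
open CutoffAux in
/-- Construction of the cutoff functions `ψ̃, ψ : [0,∞) → [0,1]` forming a squared partition of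
unity at scale `A ≥ 8`, with disjointness of supports and derivative bounds
`|ψ⁽ⁿ⁾| ≤ C_n ψ^{1-n/N}` (times `A^{-n}` in the appropriate regions), with constants `C_n`
independent of `A`. -/
theorem cutoff_construction (N : ℕ) (hN : 1 ≤ N) :
    ∃ C : ℕ → ℝ, ∀ A : ℝ, 8 ≤ A →
      ∃ ψt ψ : ℝ → ℝ,
        ContDiff ℝ (⊤ : ℕ∞) ψt ∧ ContDiff ℝ (⊤ : ℕ∞) ψ ∧
        (∀ y : ℝ, 0 ≤ y → ψt y ∈ Set.Icc (0:ℝ) 1 ∧ ψ y ∈ Set.Icc (0:ℝ) 1) ∧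
        -- (1)  1_{[0,A/4]} ≤ ψ̃ ≤ 1_{[0,A]}
        (∀ y ∈ Set.Icc (0:ℝ) (A/4), ψt y = 1) ∧
        (∀ y : ℝ, 0 ≤ y → A < y → ψt y = 0) ∧
        -- (2)  1_{[1,A/4]} ≤ ψ ≤ 1_{[1/4,A]}
        (∀ y ∈ Set.Icc (1:ℝ) (A/4), ψ y = 1) ∧
        (∀ y : ℝ, 0 ≤ y → (y < 1/4 ∨ A < y) → ψ y = 0) ∧
        -- (3)  squared partition of unity
        (∀ y : ℝ, 0 ≤ y → ψt y ^ 2 + ∑' i : ℕ, ψ (A ^ (-(1:ℤ) - (i:ℤ)) * y) ^ 2 = 1) ∧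
        -- (4)  disjointness of supports
        (∀ i : ℕ, 2 ≤ i → ∀ y : ℝ, 0 ≤ y → ψt y * ψ (A ^ (-(i:ℤ)) * y) = 0) ∧
        (∀ i i' : ℕ, 1 ≤ i → 1 ≤ i' → 2 ≤ |(i:ℤ) - (i':ℤ)| →
          ∀ y : ℝ, 0 ≤ y → ψ (A ^ (-(i:ℤ)) * y) * ψ (A ^ (-(i':ℤ)) * y) = 0) ∧
        -- (5)  derivative bounds
        (∀ n : ℕ, n ≤ N →
          (∀ y : ℝ, 0 ≤ y → y < A →
            |iteratedDeriv n ψt y| ≤ C n * ψt y ^ ((1:ℝ) - (n:ℝ) / (N:ℝ)) * (A ^ n)⁻¹) ∧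
          (∀ y : ℝ, 1/4 < y → y < 1 →
            |iteratedDeriv n ψ y| ≤ C n * ψ y ^ ((1:ℝ) - (n:ℝ) / (N:ℝ))) ∧
          (∀ y : ℝ, A/4 < y → y < A →
            |iteratedDeriv n ψ y| ≤ C n * ψ y ^ ((1:ℝ) - (n:ℝ) / (N:ℝ)) * (A ^ n)⁻¹)) := by
  classical
  obtain ⟨B, hB1, hBc, hBs⟩ := ss_master N hN
  refine ⟨fun n => B n * (4/3:ℝ) ^ n, fun A hA => ?_⟩
  have hA0 : (0:ℝ) < A := by linarith
  have hA4 : (2:ℝ) ≤ A / 4 := by linarith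
  set a : ℝ := 4 / (3 * A) with ha
  have ha0 : 0 < a := by positivity
  set u : ℝ → ℝ := fun y => a * y + (-1/3 : ℝ) with hu
  set v : ℝ → ℝ := fun z => (4/3 : ℝ) * z + (-1/3 : ℝ) with hv
  have haA : a * (A / 4) = 1 / 3 := by rw [ha]; field_simp
  have haA' : a * A = 4 / 3 := by rw [ha]; field_simp
  have hu_nonpos : ∀ y : ℝ, y ≤ A / 4 → u y ≤ 0 := by
    intro y hy
    have h1 : a * y ≤ a * (A / 4) := mul_le_mul_of_nonneg_left hy ha0.le
    rw [haA] at h1; simp only [hu]; linarith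
  have hu_ge1 : ∀ y : ℝ, A ≤ y → 1 ≤ u y := by
    intro y hy
    have h1 : a * A ≤ a * y := mul_le_mul_of_nonneg_left hy ha0.le
    rw [haA'] at h1; simp only [hu]; linarith
  have hu_lt1 : ∀ y : ℝ, y < A → u y < 1 := by
    intro y hy
    have h1 : a * y < a * A := mul_lt_mul_of_pos_left hy ha0
    rw [haA'] at h1; simp only [hu]; linarith
  have hv_nonpos : ∀ z : ℝ, z ≤ 1/4 → v z ≤ 0 := by
    intro z hz; simp only [hv]; linarith
  have hv_ge1 : ∀ z : ℝ, 1 ≤ z → 1 ≤ v z := by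
    intro z hz; simp only [hv]; linarith
  have hv_pos : ∀ z : ℝ, 1/4 < z → 0 < v z := by
    intro z hz; simp only [hv]; linarith
  have hvu : ∀ z : ℝ, v z = u (A * z) := by
    intro z; simp only [hu, hv, ha]; field_simp
  set ψt : ℝ → ℝ := fun y => cc (u y) with hψt
  set ψ : ℝ → ℝ := fun z => ss (v z) * cc (u z) with hψ
  have hψt_one : ∀ y : ℝ, y ≤ A / 4 → ψt y = 1 := fun y hy => by
    simp only [hψt]; exact cc_of_nonpos (hu_nonpos y hy)
  have hψt_zero : ∀ y : ℝ, A ≤ y → ψt y = 0 := fun y hy => by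
    simp only [hψt]; exact cc_of_one_le (hu_ge1 y hy)
  have hψ_zero_left : ∀ z : ℝ, z ≤ 1/4 → ψ z = 0 := fun z hz => by
    simp only [hψ]; rw [ss_of_nonpos (hv_nonpos z hz), zero_mul]
  have hψ_zero_right : ∀ z : ℝ, A ≤ z → ψ z = 0 := fun z hz => by
    simp only [hψ]; rw [cc_of_one_le (hu_ge1 z hz), mul_zero]
  have hψ_one : ∀ z : ℝ, 1 ≤ z → z ≤ A / 4 → ψ z = 1 := fun z h1 h2 => by
    simp only [hψ]; rw [ss_of_one_le (hv_ge1 z h1), cc_of_nonpos (hu_nonpos z h2), mul_one]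
  have hkey : ∀ z : ℝ, ψ z ^ 2 = cc (u z) ^ 2 - cc (v z) ^ 2 := by
    intro z
    have e1 := cc_sq_add_ss_sq (u z)
    have e2 := cc_sq_add_ss_sq (v z)
    rcases le_or_gt z (A / 4) with h | h
    · have hs : ss (u z) = 0 := ss_of_nonpos (hu_nonpos z h)
      have hs2 : ss (u z) ^ 2 = 0 := by rw [hs]; ring
      have hX : cc (u z) ^ 2 = 1 := by linarith
      simp only [hψ]
      calc (ss (v z) * cc (u z)) ^ 2 = ss (v z) ^ 2 * cc (u z) ^ 2 := by ring
        _ = ss (v z) ^ 2 := by rw [hX, mul_one]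
        _ = cc (u z) ^ 2 - cc (v z) ^ 2 := by rw [hX]; linarith
    · have hc : cc (v z) = 0 := cc_of_one_le (hv_ge1 z (by linarith))
      have hc2 : cc (v z) ^ 2 = 0 := by rw [hc]; ring
      have hT : ss (v z) ^ 2 = 1 := by linarith
      simp only [hψ]
      calc (ss (v z) * cc (u z)) ^ 2 = ss (v z) ^ 2 * cc (u z) ^ 2 := by ring
        _ = cc (u z) ^ 2 := by rw [hT, one_mul]
        _ = cc (u z) ^ 2 - cc (v z) ^ 2 := by rw [hc2]; ring
  have hzpow_pos : ∀ m : ℤ, (0:ℝ) < A ^ m := fun m => zpow_pos hA0 m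
  have hAinv : (A:ℝ)⁻¹ ≤ 1/4 := by
    rw [inv_le_comm₀ hA0 (by norm_num)]
    linarith
  have hA2 : ∀ m : ℤ, 2 ≤ m → A ≤ (A:ℝ) ^ m / 4 := by
    intro m hm
    have h1 : (A:ℝ) ^ (2:ℤ) ≤ A ^ m := zpow_le_zpow_right₀ (by linarith) hm
    have h2 : (A:ℝ) ^ (2:ℤ) = A * A := by
      rw [show (2:ℤ) = ((2:ℕ):ℤ) by norm_num, zpow_natCast]; ring
    have h3 : 8 * A ≤ A ^ (2:ℤ) := by rw [h2]; nlinarith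
    have h4 : 8 * A ≤ A ^ m := le_trans h3 h1
    linarith
  refine ⟨ψt, ψ, ?_, ?_, ?_, ?_, ?_, ?_, ?_, ?_, ?_, ?_, ?_⟩
  · simp only [hψt, hu]
    exact contDiff_cc.comp ((contDiff_const.mul contDiff_id).add contDiff_const)
  · simp only [hψ, hu, hv]
    exact (contDiff_ss.comp ((contDiff_const.mul contDiff_id).add contDiff_const)).mul
      (contDiff_cc.comp ((contDiff_const.mul contDiff_id).add contDiff_const))
  · intro y _
    refine ⟨⟨?_, ?_⟩, ?_, ?_⟩
    · simp only [hψt]; exact cc_nonneg _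
    · simp only [hψt]; exact cc_le_one _
    · simp only [hψ]; exact mul_nonneg (ss_nonneg _) (cc_nonneg _)
    · simp only [hψ]; exact mul_le_one₀ (ss_le_one _) (cc_nonneg _) (cc_le_one _)
  · intro y hy; exact hψt_one y hy.2
  · intro y _ hy; exact hψt_zero y hy.le
  · intro y hy; exact hψ_one y hy.1 hy.2
  · intro y _ hy
    rcases hy with h | h
    · exact hψ_zero_left y h.le
    · exact hψ_zero_right y h.le
  · -- partition of unity
    intro y hy
    obtain ⟨n₀, hn₀⟩ := pow_unbounded_of_one_lt y (show (1:ℝ) < A by linarith)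
    have hn₀' : y < (A:ℝ) ^ ((n₀:ℤ)) := by rw [zpow_natCast]; exact hn₀
    set F : ℕ → ℝ := fun i => cc (u ((A:ℝ) ^ (-(i:ℤ)) * y)) ^ 2 with hF
    have hzA : ∀ i : ℕ, A * ((A:ℝ) ^ (-(1:ℤ) - (i:ℤ)) * y) = A ^ (-(i:ℤ)) * y := by
      intro i
      rw [← mul_assoc, ← zpow_one_add₀ hA0.ne']
      have he : (1 + (-1 - (i:ℤ))) = -(i:ℤ) := by ring
      rw [he]
    have hterm : ∀ i : ℕ, ψ ((A:ℝ) ^ (-(1:ℤ) - (i:ℤ)) * y) ^ 2 = F (i+1) - F i := by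
      intro i
      rw [hkey, hvu, hzA i]
      simp only [hF]
      have hexp : (A:ℝ) ^ (-(1:ℤ) - (i:ℤ)) = A ^ (-((i+1:ℕ):ℤ)) := by
        congr 1; push_cast; ring
      rw [hexp]
    have hbig : ∀ i : ℕ, n₀ ≤ i → (A:ℝ) ^ (-(1:ℤ) - (i:ℤ)) * y ≤ 1/4 := by
      intro i hi
      have h1 : y ≤ (A:ℝ) ^ ((i:ℤ)) :=
        le_of_lt (lt_of_lt_of_le hn₀' (zpow_le_zpow_right₀ (by linarith) (by exact_mod_cast hi)))
      have h2 : (A:ℝ) ^ (-(1:ℤ) - (i:ℤ)) * y ≤ (A:ℝ) ^ (-(1:ℤ) - (i:ℤ)) * A ^ ((i:ℤ)) :=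
        mul_le_mul_of_nonneg_left h1 (hzpow_pos _).le
      rw [← zpow_add₀ hA0.ne'] at h2
      have h3 : (-(1:ℤ) - (i:ℤ) + (i:ℤ)) = -1 := by ring
      rw [h3, zpow_neg_one] at h2
      linarith
    have hzero : ∀ i ∉ Finset.range n₀, ψ ((A:ℝ) ^ (-(1:ℤ) - (i:ℤ)) * y) ^ 2 = 0 := by
      intro i hi
      rw [hψ_zero_left _ (hbig i (by simpa using hi))]
      ring
    rw [tsum_eq_sum hzero]
    have hsum : ∑ i ∈ Finset.range n₀, ψ ((A:ℝ) ^ (-(1:ℤ) - (i:ℤ)) * y) ^ 2 = F n₀ - F 0 := by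
      rw [Finset.sum_congr rfl fun i _ => hterm i]
      exact Finset.sum_range_sub F n₀
    have hF0 : F 0 = ψt y ^ 2 := by
      simp only [hF, hψt]
      norm_num
    have hFn : F n₀ = 1 := by
      simp only [hF]
      have h2 : (A:ℝ) ^ (-(n₀:ℤ)) * y ≤ A / 4 := by
        have h3 : (A:ℝ) ^ (-(n₀:ℤ)) * y < (A:ℝ) ^ (-(n₀:ℤ)) * A ^ ((n₀:ℤ)) := by
          rcases eq_or_lt_of_le hy with h | h
          · rw [← h, mul_zero]; exact mul_pos (hzpow_pos _) (hzpow_pos _)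
          · exact mul_lt_mul_of_pos_left hn₀' (hzpow_pos _)
        rw [← zpow_add₀ hA0.ne', neg_add_cancel, zpow_zero] at h3
        linarith
      rw [cc_of_nonpos (hu_nonpos _ h2)]
      ring
    rw [hsum, hF0, hFn]
    ring
  · -- disjointness ψt vs ψ
    intro i hi y _
    by_cases h : (A:ℝ) ^ (-(i:ℤ)) * y ≤ 1/4
    · rw [hψ_zero_left _ h, mul_zero]
    · push_neg at h
      have h1 := mul_lt_mul_of_pos_left h (hzpow_pos (i:ℤ))
      rw [← mul_assoc, ← zpow_add₀ hA0.ne', add_neg_cancel, zpow_zero, one_mul] at h1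
      have h2 : A ≤ y := by
        have := hA2 (i:ℤ) (by exact_mod_cast hi)
        nlinarith [hzpow_pos (i:ℤ), mul_le_mul_of_nonneg_right hA hA0.le]
      rw [hψt_zero y h2, zero_mul]
  · -- disjointness ψ vs ψ
    intro i i' hi hi' hdist y hy
    have key : ∀ j j' : ℕ, (j:ℤ) + 2 ≤ (j':ℤ) →
        ψ ((A:ℝ) ^ (-(j:ℤ)) * y) * ψ ((A:ℝ) ^ (-(j':ℤ)) * y) = 0 := by
      intro j j' hjj
      by_cases h : (A:ℝ) ^ (-(j':ℤ)) * y ≤ 1/4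
      · rw [hψ_zero_left _ h, mul_zero]
      · push_neg at h
        have h1 := mul_lt_mul_of_pos_left h (hzpow_pos (-(j:ℤ) + (j':ℤ)))
        rw [← mul_assoc, ← zpow_add₀ hA0.ne'] at h1
        have h3 : (-(j:ℤ) + (j':ℤ) + -(j':ℤ)) = -(j:ℤ) := by ring
        rw [h3] at h1
        have h4 : A ≤ (A:ℝ) ^ (-(j:ℤ)) * y := by
          have h5 := hA2 (-(j:ℤ) + (j':ℤ)) (by omega)
          nlinarith [hzpow_pos (-(j:ℤ) + (j':ℤ))]
        rw [hψ_zero_right _ h4, zero_mul]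
    rcases abs_cases ((i:ℤ) - (i':ℤ)) with ⟨he, _⟩ | ⟨he, _⟩ <;> rw [he] at hdist
    · rw [mul_comm]
      exact key i' i (by omega)
    · exact key i i' (by omega)
  · -- derivative bounds
    intro n hn
    have h43 : (0:ℝ) < (4/3:ℝ) ^ n := by positivity
    have hψt_der : ∀ y : ℝ, iteratedDeriv n ψt y = a ^ n * iteratedDeriv n cc (u y) := by
      intro y
      simp only [hψt, hu]
      exact iteratedDeriv_affine contDiff_cc a (-1/3) n y
    have han : a ^ n = (4/3:ℝ) ^ n * ((A:ℝ) ^ n)⁻¹ := by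
      rw [ha, div_pow, mul_pow, div_pow]
      ring
    refine ⟨?_, ?_, ?_⟩
    · intro y hy0 hyA
      rw [hψt_der y, abs_mul, abs_pow, abs_of_pos ha0]
      have hbound := hBc n hn (u y) (hu_lt1 y hyA)
      have hψty : ψt y = cc (u y) := by rw [hψt]
      rw [hψty]
      calc a ^ n * |iteratedDeriv n cc (u y)|
          ≤ a ^ n * (B n * cc (u y) ^ ((1:ℝ) - (n:ℝ)/(N:ℝ))) :=
            mul_le_mul_of_nonneg_left hbound (pow_pos ha0 n).le
        _ = B n * (4/3:ℝ)^n * cc (u y) ^ ((1:ℝ) - (n:ℝ)/(N:ℝ)) * ((A:ℝ) ^ n)⁻¹ := by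
            rw [han]; ring
    · intro y h14 h1
      have hev : ψ =ᶠ[nhds y] fun w => ss (v w) := by
        filter_upwards [Iio_mem_nhds (show y < A/4 by linarith)] with w hw
        simp only [hψ]
        rw [cc_of_nonpos (hu_nonpos w (le_of_lt hw)), mul_one]
      rw [Filter.EventuallyEq.iteratedDeriv_eq n hev]
      have hder : iteratedDeriv n (fun w => ss (v w)) y
          = (4/3:ℝ) ^ n * iteratedDeriv n ss (v y) := by
        simp only [hv]
        exact iteratedDeriv_affine contDiff_ss (4/3) (-1/3) n y
      rw [hder, abs_mul, abs_pow, abs_of_pos (by norm_num : (0:ℝ) < 4/3)]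
      have hbound := hBs n hn (v y) (hv_pos y h14)
      have hψy : ψ y = ss (v y) := by
        simp only [hψ]; rw [cc_of_nonpos (hu_nonpos y (by linarith)), mul_one]
      rw [hψy]
      calc (4/3:ℝ) ^ n * |iteratedDeriv n ss (v y)|
          ≤ (4/3:ℝ) ^ n * (B n * ss (v y) ^ ((1:ℝ) - (n:ℝ)/(N:ℝ))) :=
            mul_le_mul_of_nonneg_left hbound h43.le
        _ = B n * (4/3:ℝ)^n * ss (v y) ^ ((1:ℝ) - (n:ℝ)/(N:ℝ)) := by ring
    · intro y hA4y hyA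
      have hev : ψ =ᶠ[nhds y] fun w => cc (u w) := by
        filter_upwards [Ioi_mem_nhds (show (1:ℝ) < y by linarith)] with w hw
        simp only [hψ]
        rw [ss_of_one_le (hv_ge1 w (le_of_lt hw)), one_mul]
      rw [Filter.EventuallyEq.iteratedDeriv_eq n hev]
      have hder : iteratedDeriv n (fun w => cc (u w)) y
          = a ^ n * iteratedDeriv n cc (u y) := by
        simp only [hu]
        exact iteratedDeriv_affine contDiff_cc a (-1/3) n y
      rw [hder, abs_mul, abs_pow, abs_of_pos ha0]
      have hbound := hBc n hn (u y) (hu_lt1 y hyA)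
      have hψy : ψ y = cc (u y) := by
        simp only [hψ]; rw [ss_of_one_le (hv_ge1 y (by linarith)), one_mul]
      rw [hψy]
      calc a ^ n * |iteratedDeriv n cc (u y)|
          ≤ a ^ n * (B n * cc (u y) ^ ((1:ℝ) - (n:ℝ)/(N:ℝ))) :=
            mul_le_mul_of_nonneg_left hbound (pow_pos ha0 n).le
        _ = B n * (4/3:ℝ)^n * cc (u y) ^ ((1:ℝ) - (n:ℝ)/(N:ℝ)) * ((A:ℝ) ^ n)⁻¹ := by
            rw [han]; ring
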